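/- Let (X,d) be a non-branching geodesic metric space, R : X → X an isometric involution with fixed-point set H, and X₁, X₂ disjoint open sets with X ∖ H = X₁ ∪ X₂ and R(X₁) = X₂. Let x ∈ X₁ and y ∈ X₂ satisfy d(x,z) = d(y,z) for all z ∈ H. If every continuous path from X₁ to X₂ meets H, then y = R(x). -/

import Mathlib

/-- `γ` is a (unit-interval parametrized) minimal geodesic from `a` to `b`. -/
def IsMinGeodesic {X : Type*} [MetricSpace X] (γ : ℝ → X) (a b : X) : Prop :=
  γ 0 = a ∧ γ 1 = b ∧
    ∀ s ∈ Set.Icc (0 : ℝ) 1, ∀ t ∈ Set.Icc (0 : ℝ) 1,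
      dist (γ s) (γ t) = |s - t| * dist a b

/-- A minimal geodesic is continuous on `[0,1]` (it is Lipschitz there). -/
lemma IsMinGeodesic.continuousOn {X : Type*} [MetricSpace X] {γ : ℝ → X} {a b : X}
    (h : IsMinGeodesic γ a b) : ContinuousOn γ (Set.Icc (0 : ℝ) 1) := by
  have : LipschitzOnWith (Real.toNNReal (dist a b)) γ (Set.Icc (0 : ℝ) 1) := by
    rw [lipschitzOnWith_iff_dist_le_mul]
    intro s hs t ht
    rw [h.2.2 s hs t ht, Real.coe_toNNReal _ dist_nonneg, Real.dist_eq, mul_comm]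
  exact this.continuousOn

/-- In a non-branching geodesic space with a reflection structure, a point of `X₁` and a
point of `X₂` equidistant from the mirror `H` are reflections of each other. -/
theorem stmt_8 {X : Type*} [MetricSpace X]
    (hgeo : ∀ a b : X, ∃ γ : ℝ → X, IsMinGeodesic γ a b)
    (hnb : ∀ (a b b' : X) (γ γ' : ℝ → X), IsMinGeodesic γ a b → IsMinGeodesic γ' a b' →
      dist a b = dist a b' →
      (∃ ε > 0, ∀ t ∈ Set.Icc (0 : ℝ) ε, γ t = γ' t) →
      ∀ t ∈ Set.Icc (0 : ℝ) 1, γ t = γ' t)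
    (R : X → X) (hRiso : Isometry R) (hRinv : R ∘ R = id)
    (X₁ X₂ : Set X) (hX₁ : IsOpen X₁) (hX₂ : IsOpen X₂) (hdisj : Disjoint X₁ X₂)
    (hsplit : X₁ ∪ X₂ = {x : X | R x = x}ᶜ) (hswap : R '' X₁ = X₂)
    (x y : X) (hx : x ∈ X₁) (hy : y ∈ X₂)
    (heq : ∀ z : X, R z = z → dist x z = dist y z)
    (hmeet : ∀ c : ℝ → X, ContinuousOn c (Set.Icc (0 : ℝ) 1) →
      c 0 ∈ X₁ → c 1 ∈ X₂ → ∃ t ∈ Set.Icc (0 : ℝ) 1, R (c t) = c t) :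
    y = R x := by
  have hRR : ∀ p : X, R (R p) = p := fun p => congrFun hRinv p
  have hdR : ∀ p q : X, dist (R p) (R q) = dist p q := fun p q => hRiso.dist_eq p q
  set D := dist x y with hD
  have hxy : x ≠ y := fun h => Set.disjoint_left.mp hdisj hx (h ▸ hy)
  have hDpos : 0 < D := dist_pos.mpr hxy
  have hRx2 : R x ∈ X₂ := hswap ▸ ⟨x, hx, rfl⟩
  have hxH : R x ≠ x := by
    have := hsplit ▸ Set.mem_union_left X₂ hx
    exact this
  -- geodesic from x to y
  obtain ⟨γ, hγ⟩ := hgeo x y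
  have hd := hγ.2.2
  have h0 : γ 0 = x := hγ.1
  have h1 : γ 1 = y := hγ.2.1
  -- it meets H
  obtain ⟨t₀, ht₀, hfix⟩ := hmeet γ hγ.continuousOn (h0 ▸ hx) (h1 ▸ hy)
  have ht₀0 := ht₀.1
  have ht₀1 := ht₀.2
  have hxd : dist x (γ t₀) = t₀ * D := by
    have := hd 0 ⟨le_refl 0, zero_le_one⟩ t₀ ht₀
    rw [h0] at this
    rw [this, abs_sub_comm, sub_zero, abs_of_nonneg ht₀0]
  have hyd : dist y (γ t₀) = (1 - t₀) * D := by
    have := hd 1 ⟨zero_le_one, le_refl 1⟩ t₀ ht₀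
    rw [h1] at this
    rw [this, abs_of_nonneg (by linarith)]
  have ht₀half : t₀ = 1 / 2 := by
    have := heq (γ t₀) hfix
    rw [hxd, hyd] at this
    nlinarith
  subst ht₀half
  set z := γ (1 / 2) with hzdef
  have hhalf : (1 / 2 : ℝ) ∈ Set.Icc (0 : ℝ) 1 := by constructor <;> norm_num
  have hxz : dist x z = (1 / 2) * D := by rw [hxd]
  have hzRx : dist z (R x) = (1 / 2) * D := by
    calc dist z (R x) = dist (R z) (R (R x)) := (hdR _ _).symm
      _ = dist z x := by rw [hfix, hRR]
      _ = (1/2) * D := by rw [dist_comm]; exact hxz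
  -- every fixed point is at distance ≥ D/2 from x
  have hfar : ∀ w : X, R w = w → (1 / 2) * D ≤ dist x w := by
    intro w hw
    have h1 := heq w hw
    have h2 : D ≤ dist x w + dist w y := dist_triangle x w y
    rw [dist_comm w y] at h2
    linarith
  -- dist x (R x) = D
  have hE : dist x (R x) = D := by
    refine le_antisymm ?_ ?_
    · calc dist x (R x) ≤ dist x z + dist z (R x) := dist_triangle _ _ _
        _ = D := by rw [hxz, hzRx]; ring
    · obtain ⟨σ, hσ⟩ := hgeo x (R x)
      obtain ⟨t₁, ht₁, hw⟩ := hmeet σ hσ.continuousOn (hσ.1 ▸ hx) (hσ.2.1 ▸ hRx2)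
      set E := dist x (R x) with hEdef
      have hxw : dist x (σ t₁) = t₁ * E := by
        have := hσ.2.2 0 ⟨le_refl 0, zero_le_one⟩ t₁ ht₁
        rw [hσ.1] at this
        rw [this, abs_sub_comm, sub_zero, abs_of_nonneg ht₁.1]
      have hwRx : dist (σ t₁) (R x) = dist x (σ t₁) := by
        conv_lhs => rw [← hw, hdR, dist_comm]
      have hsum : dist x (σ t₁) + dist (σ t₁) (R x) = E := by
        have h2 := hσ.2.2 t₁ ht₁ 1 ⟨zero_le_one, le_refl 1⟩
        rw [hσ.2.1] at h2
        rw [h2, hxw, abs_of_nonpos (by linarith [ht₁.2]), hEdef]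
        ring
      have := hfar (σ t₁) hw
      linarith [hwRx ▸ hsum]
  -- the reflected concatenation
  set c : ℝ → X := fun t => if t ≤ 1 / 2 then γ t else R (γ (1 - t)) with hcdef
  have hc01 : c 0 = x ∧ c 1 = R x := by
    constructor
    · simp only [hcdef]; rw [if_pos (by norm_num), h0]
    · simp only [hcdef]; rw [if_neg (by norm_num)]; norm_num [h0]
  -- key cross distance estimate
  have hcross : ∀ s ∈ Set.Icc (0:ℝ) 1, ∀ t ∈ Set.Icc (0:ℝ) 1, s ≤ 1/2 → ¬ t ≤ 1/2 →
      dist (γ s) (R (γ (1 - t))) = (t - s) * D := by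
    intro s hs t ht hs2 ht2
    push_neg at ht2
    have h1t : (1 - t) ∈ Set.Icc (0:ℝ) 1 := ⟨by linarith [ht.2], by linarith [ht.1]⟩
    have hsz : dist (γ s) z = (1/2 - s) * D := by
      rw [hd s hs (1/2) hhalf, abs_of_nonpos (by linarith)]
      ring_nf
      rw [hD]
    have hzt : dist z (R (γ (1 - t))) = (t - 1/2) * D := by
      conv_lhs => rw [← hfix, hdR]
      rw [hd (1/2) hhalf (1-t) h1t, abs_of_nonneg (by linarith)]
      ring_nf
      rw [hD]
    have hxs : dist x (γ s) = s * D := by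
      have := hd 0 ⟨le_refl 0, zero_le_one⟩ s hs
      rw [h0] at this
      rw [this, abs_sub_comm, sub_zero, abs_of_nonneg hs.1]
    have htx : dist (R (γ (1 - t))) (R x) = (1 - t) * D := by
      rw [hdR]
      have := hd (1-t) h1t 0 ⟨le_refl 0, zero_le_one⟩
      rw [h0] at this
      rw [this, sub_zero, abs_of_nonneg h1t.1]
    refine le_antisymm ?_ ?_
    · calc dist (γ s) (R (γ (1 - t))) ≤ dist (γ s) z + dist z (R (γ (1 - t))) :=
          dist_triangle _ _ _
        _ = (t - s) * D := by rw [hsz, hzt]; ring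
    · have htri : dist x (R x) ≤ dist x (γ s) + dist (γ s) (R (γ (1-t))) + dist (R (γ (1-t))) (R x) :=
        dist_triangle4 _ _ _ _
      rw [hE, hxs, htx] at htri
      linarith
  have hc : IsMinGeodesic c x (R x) := by
    refine ⟨hc01.1, hc01.2, ?_⟩
    intro s hs t ht
    rw [hE]
    rcases le_total s t with hst | hst
    · simp only [hcdef]
      rw [abs_of_nonpos (by linarith)]
      by_cases hs2 : s ≤ 1/2 <;> by_cases ht2 : t ≤ 1/2
      · rw [if_pos hs2, if_pos ht2, hd s hs t ht, abs_of_nonpos (by linarith)]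
      · rw [if_pos hs2, if_neg ht2, hcross s hs t ht hs2 ht2]; ring
      · exact absurd (hst.trans ht2) hs2
      · push_neg at hs2
        rw [if_neg (not_le.mpr hs2), if_neg ht2, hdR]
        have h1s : (1 - s) ∈ Set.Icc (0:ℝ) 1 := ⟨by linarith [hs.2], by linarith [hs.1]⟩
        have h1t : (1 - t) ∈ Set.Icc (0:ℝ) 1 := ⟨by linarith [ht.2], by linarith [ht.1]⟩
        rw [hd (1-s) h1s (1-t) h1t, abs_of_nonneg (by linarith)]
        ring
    · simp only [hcdef]
      rw [abs_of_nonneg (by linarith)]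
      by_cases hs2 : s ≤ 1/2 <;> by_cases ht2 : t ≤ 1/2
      · rw [if_pos hs2, if_pos ht2, hd s hs t ht, abs_of_nonneg (by linarith)]
      · exact absurd (hst.trans hs2) ht2
      · rw [if_neg hs2, if_pos ht2, dist_comm, hcross t ht s hs ht2 hs2]
      · push_neg at ht2
        rw [if_neg hs2, if_neg (not_le.mpr ht2), hdR]
        have h1s : (1 - s) ∈ Set.Icc (0:ℝ) 1 := ⟨by linarith [hs.2], by linarith [hs.1]⟩
        have h1t : (1 - t) ∈ Set.Icc (0:ℝ) 1 := ⟨by linarith [ht.2], by linarith [ht.1]⟩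
        rw [hd (1-s) h1s (1-t) h1t, abs_of_nonpos (by linarith)]
        ring
  have hagree : ∃ ε > 0, ∀ t ∈ Set.Icc (0:ℝ) ε, γ t = c t := by
    refine ⟨1/2, by norm_num, fun t ht => ?_⟩
    simp only [hcdef]
    rw [if_pos ht.2]
  have := hnb x y (R x) γ c hγ hc hE.symm hagree 1 ⟨zero_le_one, le_refl 1⟩
  rw [h1, hc01.2] at this
  exact this
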